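/- In the boolean algebra P(κ) for an infinite cardinal κ, the family F of all nonempty proper initial segments of κ (i.e., F = {α : 0 < α < κ}, viewing ordinals as sets of smaller ordinals) is a maximal irredundant subset of P(κ). -/

import Mathlib

open Cardinal Set

universe u
variable {B : Type u} [BooleanAlgebra B]

/-- Membership in the boolean subalgebra of `B` generated by `E`. -/
inductive InGen (E : Set B) : B → Prop
  | base {a : B} : a ∈ E → InGen E a
  | bot : InGen E ⊥
  | compl {a : B} : InGen E a → InGen E aᶜ
  | sup {a b : B} : InGen E a → InGen E b → InGen E (a ⊔ b)

/-- `E` is irredundant. -/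
def Irred (E : Set B) : Prop := ∀ a ∈ E, ¬ InGen (E \ {a}) a

/-- `E` is independent. -/
def Indep (E : Set B) : Prop :=
  ∀ F G : Finset B, ↑F ⊆ E → ↑G ⊆ E → Disjoint F G →
    F.inf id ⊓ G.inf (fun a => aᶜ) ≠ ⊥

/-- `S` is dense in `B`. -/
def DenseSub (S : Set B) : Prop := ∀ b : B, b ≠ ⊥ → ∃ d ∈ S, d ≠ ⊥ ∧ d ≤ b

/-- pi-weight of `B`: least size of a dense subset. -/
noncomputable def piWeight (B : Type u) [BooleanAlgebra B] : Cardinal :=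
  sInf {c | ∃ S : Set B, DenseSub S ∧ #S = c}

/-- `E` is a maximal irredundant subset of `B`. -/
def MaxIrred (E : Set B) : Prop :=
  Irred E ∧ ∀ b : B, b ∉ E → ¬ Irred (insert b E)

/-- least size of a maximal irredundant subset of `B`. -/
noncomputable def irrMM (B : Type u) [BooleanAlgebra B] : Cardinal :=
  sInf {c | ∃ E : Set B, MaxIrred E ∧ #E = c}


lemma InGen.inf {E : Set B} {a b : B} (ha : InGen E a) (hb : InGen E b) :
    InGen E (a ⊓ b) := by
  have : a ⊓ b = (aᶜ ⊔ bᶜ)ᶜ := by simp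
  rw [this]; exact (ha.compl.sup hb.compl).compl

theorem initialSegments_maxIrred (κ : Cardinal.{u}) (hκ : Cardinal.aleph0 ≤ κ) :
    MaxIrred {b : Set κ.ord.ToType | ∃ x : κ.ord.ToType, b = Set.Iio x ∧ b.Nonempty} := by
  set α := κ.ord.ToType with hα
  set E : Set (Set α) := {b : Set α | ∃ x : α, b = Set.Iio x ∧ b.Nonempty} with hE
  have hinj : ∀ x y : α, Set.Iio x = Set.Iio y → x = y := by
    intro x y h
    by_contra hne
    rcases lt_or_gt_of_ne hne with hlt | hlt
    · exact lt_irrefl x ((Set.ext_iff.1 h x).2 hlt)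
    · exact lt_irrefl y ((Set.ext_iff.1 h y).1 hlt)
  have hnomax : ∀ x : α, ∃ y : α, x < y := by
    intro x
    have hlim := Cardinal.isSuccLimit_ord hκ
    let e := Ordinal.ToType.mk (o := κ.ord)
    set a := e.symm x with ha
    have ha1 : (a : Ordinal) + 1 < κ.ord := by
      have := hlim.succ_lt (Set.mem_Iio.1 a.2)
      simpa [Order.succ_eq_add_one] using this
    refine ⟨e ⟨(a : Ordinal) + 1, ha1⟩, ?_⟩
    have h2 : e.symm x < (⟨(a : Ordinal) + 1, ha1⟩ : Set.Iio κ.ord) := by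
      show (a : Ordinal) < (a : Ordinal) + 1
      exact lt_add_one _
    calc x = e (e.symm x) := (e.apply_symm_apply x).symm
      _ < _ := e.lt_iff_lt.2 h2
  constructor
  · -- Irredundance
    rintro a ⟨x, rfl, hne⟩ hgen
    obtain ⟨z0, hz0⟩ := hne
    have key : ∀ b : Set α, InGen (E \ {Set.Iio x}) b →
        ∃ z, z < x ∧ ∀ w, z ≤ w → w < x → (w ∈ b ↔ x ∈ b) := by
      intro b hb
      induction hb with
      | @base c hc =>
        obtain ⟨⟨y, rfl, _⟩, hcx⟩ := hc
        have hyx : y ≠ x := fun h => hcx (by rw [h]; rfl)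
        rcases lt_or_gt_of_ne hyx with hlt | hlt
        · exact ⟨y, hlt, fun w hw1 hw2 => by
            simp only [Set.mem_Iio]
            exact ⟨fun h => absurd (lt_of_le_of_lt hw1 h) (lt_irrefl _),
                   fun h => absurd (hlt.trans h) (lt_irrefl _)⟩⟩
        · exact ⟨z0, hz0, fun w hw1 hw2 => by
            simp only [Set.mem_Iio]
            exact ⟨fun _ => hlt, fun _ => hw2.trans hlt⟩⟩
      | bot => exact ⟨z0, hz0, fun w _ _ => by simp⟩
      | @compl c _ ih =>
        obtain ⟨z, hz, hzp⟩ := ih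
        exact ⟨z, hz, fun w hw1 hw2 => by
          simp only [Set.mem_compl_iff]; exact not_congr (hzp w hw1 hw2)⟩
      | @sup c d _ _ ihc ihd =>
        obtain ⟨z1, hz1, hz1p⟩ := ihc
        obtain ⟨z2, hz2, hz2p⟩ := ihd
        refine ⟨max z1 z2, max_lt hz1 hz2, fun w hw1 hw2 => ?_⟩
        simp only [Set.sup_eq_union, Set.mem_union]
        rw [hz1p w (le_trans (le_max_left _ _) hw1) hw2,
            hz2p w (le_trans (le_max_right _ _) hw1) hw2]
    obtain ⟨z, hz, hzp⟩ := key _ hgen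
    exact lt_irrefl x ((hzp z le_rfl hz).1 hz)
  · -- Maximality
    intro b hb hirr
    have hne : Nonempty α := by
      rw [hα]
      refine Ordinal.toType_nonempty_iff_ne_zero.2 ?_
      intro h0
      have hk0 : κ = 0 := by simpa using congrArg Ordinal.card h0
      rw [hk0] at hκ
      simp at hκ
      exact Cardinal.aleph0_ne_zero hκ
    obtain ⟨m⟩ := hne
    obtain ⟨m0, -, hm0⟩ := (wellFounded_lt (α := α)).has_min Set.univ ⟨m, trivial⟩
    have hm0le : ∀ w : α, m0 ≤ w := fun w => le_of_not_gt (fun h => hm0 w trivial h)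
    by_cases hbe : b = ∅
    · exact hirr b (Set.mem_insert _ _)
        (by rw [hbe, ← Set.bot_eq_empty]; exact InGen.bot)
    by_cases hbu : b = Set.univ
    · refine hirr b (Set.mem_insert _ _) ?_
      rw [hbu]
      have hu : (Set.univ : Set α) = (⊥ : Set α)ᶜ := by simp
      rw [hu]; exact InGen.bot.compl
    have helper : ∀ (c : Set α) (x : α),
        InGen ((insert b E) \ {Set.Iio x}) c →
        (∀ w, w < x → w ∉ c) → x ∈ c → m0 < x → False := by
      intro c x hcgen hx1 hx2 hx3
      obtain ⟨y, hy⟩ := hnomax x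
      obtain ⟨s, hs, hsmin⟩ := (wellFounded_lt (α := α)).has_min {y | x < y} ⟨y, hy⟩
      have hsle : ∀ w, x < w → s ≤ w := fun w hw => le_of_not_gt (fun h => hsmin w hw h)
      have hxeq : Set.Iio x = Set.Iio s ⊓ cᶜ := by
        ext w
        simp only [Set.mem_Iio, Set.inf_eq_inter, Set.mem_inter_iff, Set.mem_compl_iff]
        constructor
        · intro hw; exact ⟨hw.trans hs, hx1 w hw⟩
        · rintro ⟨hw1, hw2⟩
          rcases lt_trichotomy w x with h | h | h
          · exact h
          · exact absurd (h ▸ hx2) hw2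
          · exact absurd hw1 (not_lt.2 (hsle w h))
      have hIx : Set.Iio x ∈ E := ⟨x, rfl, ⟨m0, hx3⟩⟩
      have hIs : Set.Iio s ∈ (insert b E) \ {Set.Iio x} := by
        refine ⟨Set.mem_insert_of_mem _ ⟨s, rfl, ⟨x, hs⟩⟩, ?_⟩
        intro h
        exact absurd (hinj _ _ h) (ne_of_gt hs)
      apply hirr (Set.Iio x) (Set.mem_insert_of_mem _ hIx)
      have hg := (InGen.base hIs).inf hcgen.compl
      rwa [← hxeq] at hg
    by_cases hmb : m0 ∈ b
    · -- use c := bᶜ, x := min of bᶜ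
      have hcne : bᶜ.Nonempty := by
        rw [Set.nonempty_compl]; exact hbu
      obtain ⟨x, hx, hxmin⟩ := (wellFounded_lt (α := α)).has_min bᶜ hcne
      have hx3 : m0 < x := lt_of_le_of_ne (hm0le x) (by rintro rfl; exact hx hmb)
      have hbmem : b ∈ (insert b E) \ {Set.Iio x} := by
        refine ⟨Set.mem_insert _ _, ?_⟩
        intro h
        exact hb (by rw [Set.mem_singleton_iff] at h; rw [h]; exact ⟨x, rfl, ⟨m0, hx3⟩⟩)
      exact helper bᶜ x (InGen.base hbmem).compl
        (fun w hw hwc => hxmin w hwc hw) hx hx3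
    · -- use c := b, x := min of b
      have hbne : b.Nonempty := Set.nonempty_iff_ne_empty.2 hbe
      obtain ⟨x, hx, hxmin⟩ := (wellFounded_lt (α := α)).has_min b hbne
      have hx3 : m0 < x := lt_of_le_of_ne (hm0le x) (by rintro rfl; exact hmb hx)
      have hbmem : b ∈ (insert b E) \ {Set.Iio x} := by
        refine ⟨Set.mem_insert _ _, ?_⟩
        intro h
        exact hb (by rw [Set.mem_singleton_iff] at h; rw [h]; exact ⟨x, rfl, ⟨m0, hx3⟩⟩)
      exact helper b x (InGen.base hbmem)
        (fun w hw hwc => hxmin w hwc hw) hx hx3
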